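/- Fix s ∈ ℝ. On L²((0,∞), ℂ) define: (M_sF)(ξ) = ξ^{is}F(ξ) with ξ^{is} = exp(is·log ξ); (D_a^{(s)}F)(ξ) = a^{-1/2} a^{is} F(a⁻¹ξ) for a > 0; and (T_bF)(ξ) = e^{ibξ}F(ξ) for b ∈ ℝ. Then for every a > 0 and b ∈ ℝ one has the intertwining identities M_s ∘ D_a^{(0)} = D_a^{(s)} ∘ M_s and M_s ∘ T_b = T_b ∘ M_s (as operators on L²((0,∞), ℂ)). Consequently the unitary operator M_s conjugates the family {D_a^{(0)}, T_b} into the family {D_a^{(s)}, T_b}. -/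
import Mathlib


/-- Multiplication by `ξ^{is} = exp(i s log ξ)`. -/
noncomputable def multChar (s : ℝ) (F : ℝ → ℂ) : ℝ → ℂ :=
  fun ξ => Complex.exp (Complex.I * s * Real.log ξ) * F ξ

/-- The twisted dilation `(D_a^{(s)}F)(ξ) = a^{-1/2} a^{is} F(a⁻¹ξ)`. -/
noncomputable def twistedDilation (s a : ℝ) (F : ℝ → ℂ) : ℝ → ℂ :=
  fun ξ => (↑(a ^ (-(1 / 2) : ℝ)) : ℂ) * Complex.exp (Complex.I * s * Real.log a) *
    F (a⁻¹ * ξ)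

/-- Multiplication by the character `ξ ↦ e^{ibξ}`. -/
noncomputable def multExp (b : ℝ) (F : ℝ → ℂ) : ℝ → ℂ :=
  fun ξ => Complex.exp (Complex.I * b * ξ) * F ξ

/-- The intertwining identities `M_s ∘ D_a^{(0)} = D_a^{(s)} ∘ M_s` and
`M_s ∘ T_b = T_b ∘ M_s` as operators on `L²((0,∞), ℂ)`, i.e. pointwise on `(0,∞)`. -/
theorem multChar_intertwines (s : ℝ) (a b : ℝ) (ha : 0 < a) (F : ℝ → ℂ) :
    (∀ ξ ∈ Set.Ioi (0 : ℝ),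
      multChar s (twistedDilation 0 a F) ξ = twistedDilation s a (multChar s F) ξ)
    ∧ (∀ ξ ∈ Set.Ioi (0 : ℝ),
      multChar s (multExp b F) ξ = multExp b (multChar s F) ξ) := by
  constructor
  · intro ξ hξ
    have hξ0 : (0:ℝ) < ξ := hξ
    have hlog : Real.log (a⁻¹ * ξ) = Real.log ξ - Real.log a := by
      rw [Real.log_mul (by positivity) (ne_of_gt hξ0), Real.log_inv]
      ring
    simp only [multChar, twistedDilation, hlog]
    push_cast
    have h : Complex.exp (Complex.I * s * Real.log a) *
        Complex.exp (Complex.I * s * ((Real.log ξ : ℂ) - Real.log a)) =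
        Complex.exp (Complex.I * s * Real.log ξ) := by
      rw [← Complex.exp_add]; ring_nf
    rw [← h]; simp; ring
  · intro ξ hξ
    simp only [multChar, multExp]
    ring
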